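/- arXiv:1810.03827 — 3 statements merged into one kernel-verified Lean document; each statement's English description precedes it below -/
import Mathlib

section
/- Let q ≥ 2 and set N = q² − 1. Suppose a, b ∈ ℤ/Nℤ satisfy the multiset equality {−q·a, −q·b} = {a, b}. Then either b = −q·a in ℤ/Nℤ, or both a and b are divisible by q − 1 (i.e., a, b lie in the subgroup (q−1)·(ℤ/Nℤ)). -/
lemma key (q : ℕ) (hq : 2 ≤ q) (x : ZMod (q ^ 2 - 1))
    (hx : ((q : ZMod (q ^ 2 - 1)) + 1) * x = 0) :
    ∃ c : ZMod (q ^ 2 - 1), x = ((q : ZMod (q ^ 2 - 1)) - 1) * c := by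
  have hN : q ^ 2 - 1 = (q - 1) * (q + 1) := by
    obtain ⟨n, rfl⟩ : ∃ n, q = n + 2 := ⟨q - 2, by omega⟩
    show (n + 2) ^ 2 - 1 = (n + 1) * (n + 3)
    ring_nf
    omega
  have hNpos : 0 < q ^ 2 - 1 := by
    rw [hN]; exact Nat.mul_pos (by omega) (by omega)
  haveI : NeZero (q ^ 2 - 1) := ⟨hNpos.ne'⟩
  have h2 : ((((q + 1) * x.val : ℕ)) : ZMod (q ^ 2 - 1)) = 0 := by
    push_cast
    rw [ZMod.natCast_val, ZMod.cast_id]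
    exact hx
  rw [ZMod.natCast_eq_zero_iff] at h2
  obtain ⟨v, hv⟩ : ∃ v, x.val = v := ⟨_, rfl⟩
  rw [hv, hN] at h2
  obtain ⟨k, hk⟩ := h2
  have hxval : v = (q - 1) * k :=
    Nat.eq_of_mul_eq_mul_left (by omega : 0 < q + 1) (by rw [hk]; ring)
  refine ⟨(k : ZMod (q ^ 2 - 1)), ?_⟩
  have hx' : x = ((x.val : ℕ) : ZMod (q ^ 2 - 1)) := by
    rw [ZMod.natCast_val, ZMod.cast_id]
  rw [hx', hv, hxval]
  push_cast [Nat.cast_sub (by omega : 1 ≤ q)]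
  ring

/-- For `q ≥ 2` and `N = q² − 1`, if `a, b ∈ ℤ/Nℤ` satisfy the
multiset equality `{−q·a, −q·b} = {a, b}`, then either `b = −q·a`, or both `a`
and `b` are multiples of `q − 1` in `ℤ/Nℤ`. -/
theorem stmt1 (q : ℕ) (hq : 2 ≤ q) (a b : ZMod (q ^ 2 - 1))
    (h : ({-((q : ZMod (q ^ 2 - 1)) * a), -((q : ZMod (q ^ 2 - 1)) * b)} :
        Multiset (ZMod (q ^ 2 - 1))) = {a, b}) :
    b = -((q : ZMod (q ^ 2 - 1)) * a) ∨
      ((∃ c : ZMod (q ^ 2 - 1), a = ((q : ZMod (q ^ 2 - 1)) - 1) * c) ∧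
       (∃ c : ZMod (q ^ 2 - 1), b = ((q : ZMod (q ^ 2 - 1)) - 1) * c)) := by
  rw [show ({-((q : ZMod (q ^ 2 - 1)) * a), -((q : ZMod (q ^ 2 - 1)) * b)} :
      Multiset (ZMod (q ^ 2 - 1))) = -((q : ZMod (q ^ 2 - 1)) * a) ::ₘ {-((q : ZMod (q ^ 2 - 1)) * b)} from rfl,
    show ({a, b} : Multiset (ZMod (q ^ 2 - 1))) = a ::ₘ {b} from rfl,
    Multiset.cons_eq_cons] at h
  rcases h with ⟨h1, h2⟩ | ⟨_, cs, h1, h2⟩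
  · simp only [Multiset.singleton_inj] at h2
    right
    exact ⟨key q hq a (by linear_combination -h1), key q hq b (by linear_combination -h2)⟩
  · left
    have : cs = 0 := by
      have := congrArg Multiset.card h1
      simpa using this.symm
    subst this
    simp only [Multiset.singleton_eq_cons_iff] at h1 h2
    exact h2.1
end

section
/- Let R be a commutative ring and Φ = [[0,1],[−1,0]] ∈ GL₂(R). Let C = ℤ/2 = {1, τ}. Define two actions of C on the group G = GL₂(R) × R^×: in the first, τ·(h,a) = (a·Φ h^{-⊤} Φ^{-1}, a); in the second, τ·(h,a) = (a·h^{-⊤}, a). Then the map sending (h,a)⋊1 ↦ (a^{-1}h, a^{-1})⋊1 and (h,a)⋊τ ↦ (a^{-1} h Φ, −a^{-1})⋊τ is a group isomorphism from the first semidirect product (GL₂(R) × R^×) ⋊ C onto the second. -/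
open Matrix

namespace Stmt3Aux
variable {R : Type*} [CommRing R]

def sc : Rˣ →* GL (Fin 2) R := Units.map (Matrix.scalar (Fin 2)).toMonoidHom

lemma sc_val (a : Rˣ) : (sc a : Matrix (Fin 2) (Fin 2) R) = (a : R) • (1 : Matrix (Fin 2) (Fin 2) R) := by
  show Matrix.scalar (Fin 2) (a : R) = _
  rw [Matrix.scalar_apply, ← Matrix.smul_one_eq_diagonal]

lemma sc_mul_val (a : Rˣ) (u : GL (Fin 2) R) :
    ((sc a * u : GL (Fin 2) R) : Matrix (Fin 2) (Fin 2) R) = (a : R) • (u : Matrix (Fin 2) (Fin 2) R) := by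
  rw [Units.val_mul, sc_val, smul_mul_assoc, one_mul]

lemma sc_comm (a : Rˣ) (u : GL (Fin 2) R) : u * sc a = sc a * u := by
  apply Units.ext
  rw [Units.val_mul, Units.val_mul, sc_val, smul_mul_assoc, one_mul, mul_smul_comm, mul_one]

lemma sc_mul_left (a : Rˣ) (u v : GL (Fin 2) R) : u * (sc a * v) = sc a * (u * v) := by
  rw [← mul_assoc, sc_comm, mul_assoc]

lemma sc_sc (x y : Rˣ) (u : GL (Fin 2) R) : sc x * (sc y * u) = sc (x * y) * u := by
  rw [← mul_assoc, ← _root_.map_mul]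

lemma sc_sc' (x y : Rˣ) : (sc x : GL (Fin 2) R) * sc y = sc (x * y) := (_root_.map_mul sc x y).symm

lemma sc_inv (a : Rˣ) : (sc a : GL (Fin 2) R)⁻¹ = sc a⁻¹ := (map_inv sc a).symm

lemma sc_neg (a : Rˣ) : (sc (-a) : GL (Fin 2) R) = -(sc a) := by
  apply Units.ext
  rw [Units.val_neg, sc_val, sc_val, Units.val_neg, neg_smul]

def Tr (u : GL (Fin 2) R) : GL (Fin 2) R :=
  ⟨(u : Matrix (Fin 2) (Fin 2) R)ᵀ, ((u⁻¹ : GL (Fin 2) R) : Matrix (Fin 2) (Fin 2) R)ᵀ,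
   by rw [← Matrix.transpose_mul, ← Units.val_mul, inv_mul_cancel, Units.val_one, Matrix.transpose_one],
   by rw [← Matrix.transpose_mul, ← Units.val_mul, mul_inv_cancel, Units.val_one, Matrix.transpose_one]⟩

lemma Tr_val (u : GL (Fin 2) R) : (Tr u : Matrix (Fin 2) (Fin 2) R) = (u : Matrix (Fin 2) (Fin 2) R)ᵀ := rfl

lemma Tr_mul (u v : GL (Fin 2) R) : Tr (u * v) = Tr v * Tr u := by
  apply Units.ext
  rw [Units.val_mul, Tr_val, Tr_val, Tr_val, Units.val_mul, Matrix.transpose_mul]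

lemma Tr_neg (u : GL (Fin 2) R) : Tr (-u) = -(Tr u) := by
  apply Units.ext
  rw [Units.val_neg, Tr_val, Tr_val, Units.val_neg, Matrix.transpose_neg]

lemma Tr_sc (a : Rˣ) : Tr (sc a : GL (Fin 2) R) = sc a := by
  apply Units.ext
  rw [Tr_val, sc_val, Matrix.transpose_smul, Matrix.transpose_one]

lemma mk_mul {N G : Type*} [Group N] [Group G] (φ : G →* MulAut N) (l l' : N) (c c' : G) :
    (⟨l, c⟩ : N ⋊[φ] G) * ⟨l', c'⟩ = ⟨l * φ c l', c * c'⟩ := rfl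

def fwd (φ₁ φ₂ : Multiplicative (ZMod 2) →* MulAut (GL (Fin 2) R × Rˣ))
    (ΦU : GL (Fin 2) R) (τ : Multiplicative (ZMod 2)) :
    ((GL (Fin 2) R × Rˣ) ⋊[φ₁] Multiplicative (ZMod 2)) →
      ((GL (Fin 2) R × Rˣ) ⋊[φ₂] Multiplicative (ZMod 2)) :=
  fun x => if x.right = τ then ⟨(sc x.left.2⁻¹ * x.left.1 * ΦU, -x.left.2⁻¹), x.right⟩
    else ⟨(sc x.left.2⁻¹ * x.left.1, x.left.2⁻¹), x.right⟩

lemma fwd_fwd (φ₁ φ₂ : Multiplicative (ZMod 2) →* MulAut (GL (Fin 2) R × Rˣ))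
    (ΦU : GL (Fin 2) R) (hsq : ΦU * ΦU = -1) (τ : Multiplicative (ZMod 2))
    (x : (GL (Fin 2) R × Rˣ) ⋊[φ₁] Multiplicative (ZMod 2)) :
    fwd φ₂ φ₁ ΦU τ (fwd φ₁ φ₂ ΦU τ x) = x := by
  rcases x with ⟨⟨h, a⟩, c⟩
  by_cases hc : c = τ
  · simp [fwd, hc, sc_neg, sc_sc, neg_mul, mul_neg, neg_neg, mul_assoc, hsq, inv_neg, inv_inv,
      sc_sc']
  · simp [fwd, hc, sc_sc, mul_assoc, inv_inv, sc_sc']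

end Stmt3Aux
namespace Stmt3Aux
open Matrix
variable {R : Type*} [CommRing R]

set_option maxHeartbeats 1000000 in
lemma fwd_mul (φ₁ φ₂ : Multiplicative (ZMod 2) →* MulAut (GL (Fin 2) R × Rˣ))
    (ΦU : GL (Fin 2) R) (τ : Multiplicative (ZMod 2))
    (hPhiInvNeg : ΦU⁻¹ = -ΦU) (hTrPhi : Tr ΦU = -ΦU)
    (hsqv : (ΦU : Matrix (Fin 2) (Fin 2) R) * ΦU = -(1 : Matrix (Fin 2) (Fin 2) R))
    (h1τ : (1 : Multiplicative (ZMod 2)) ≠ τ) (hττ : τ * τ = 1)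
    (hcase : ∀ c : Multiplicative (ZMod 2), c = 1 ∨ c = τ)
    (A1 : ∀ (h : GL (Fin 2) R) (a : Rˣ), (φ₁ τ) (h, a) = (sc a * (ΦU * Tr h⁻¹ * ΦU⁻¹), a))
    (A2 : ∀ (h : GL (Fin 2) R) (a : Rˣ), (φ₂ τ) (h, a) = (sc a * Tr h⁻¹, a))
    (x y : (GL (Fin 2) R × Rˣ) ⋊[φ₁] Multiplicative (ZMod 2)) :
    fwd φ₁ φ₂ ΦU τ (x * y) = fwd φ₁ φ₂ ΦU τ x * fwd φ₁ φ₂ ΦU τ y := by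
  obtain ⟨⟨h, a⟩, c⟩ := x; obtain ⟨⟨h', a'⟩, c'⟩ := y
  rcases hcase c with rfl | rfl <;> rcases hcase c' with rfl | rfl
  · -- (1,1)
    simp only [mk_mul, _root_.map_one, MulAut.one_apply, Prod.mk_mul_mk, one_mul, mul_one,
      fwd, if_neg h1τ, SemidirectProduct.ext_iff, Prod.mk.injEq]
    refine ⟨⟨?_, ?_⟩, trivial⟩
    · apply Units.ext
      simp only [mul_inv, _root_.mul_inv_rev, inv_inv, inv_neg, sc_inv, Tr_mul, Tr_sc,
        Tr_neg, hPhiInvNeg, hTrPhi, sc_neg, neg_mul, mul_neg, neg_neg, Units.val_mul,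
        Units.val_neg, Units.val_one, sc_val, Tr_val, smul_mul_assoc, mul_smul_comm,
        smul_smul, one_mul, mul_one, one_smul, neg_smul, smul_neg, hsqv, mul_assoc,
        Units.inv_mul, Units.mul_inv, Units.inv_mul_cancel_left,
        Units.mul_inv_cancel_left, mul_comm, mul_left_comm]
    · simp [mul_inv, mul_comm]
  · -- (1,τ)
    simp only [mk_mul, _root_.map_one, MulAut.one_apply, Prod.mk_mul_mk, one_mul, mul_one,
      A1, A2, hττ, fwd, if_neg h1τ, eq_self_iff_true, if_true,
      SemidirectProduct.ext_iff, Prod.mk.injEq]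
    refine ⟨⟨?_, ?_⟩, trivial⟩
    · apply Units.ext
      simp only [mul_inv, _root_.mul_inv_rev, inv_inv, inv_neg, sc_inv, Tr_mul, Tr_sc,
        Tr_neg, hPhiInvNeg, hTrPhi, sc_neg, neg_mul, mul_neg, neg_neg, Units.val_mul,
        Units.val_neg, Units.val_one, sc_val, Tr_val, smul_mul_assoc, mul_smul_comm,
        smul_smul, one_mul, mul_one, one_smul, neg_smul, smul_neg, hsqv, mul_assoc,
        Units.inv_mul, Units.mul_inv, Units.inv_mul_cancel_left,
        Units.mul_inv_cancel_left, mul_comm, mul_left_comm]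
      try rw [mul_left_comm, Units.mul_inv, mul_one]
    · simp [mul_inv, mul_comm]
  · -- (τ,1)
    simp only [mk_mul, _root_.map_one, MulAut.one_apply, Prod.mk_mul_mk, one_mul, mul_one,
      A1, A2, hττ, fwd, if_neg h1τ, eq_self_iff_true, if_true,
      SemidirectProduct.ext_iff, Prod.mk.injEq]
    refine ⟨⟨?_, ?_⟩, trivial⟩
    · apply Units.ext
      simp only [mul_inv, _root_.mul_inv_rev, inv_inv, inv_neg, sc_inv, Tr_mul, Tr_sc,
        Tr_neg, hPhiInvNeg, hTrPhi, sc_neg, neg_mul, mul_neg, neg_neg, Units.val_mul,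
        Units.val_neg, Units.val_one, sc_val, Tr_val, smul_mul_assoc, mul_smul_comm,
        smul_smul, one_mul, mul_one, one_smul, neg_smul, smul_neg, hsqv, mul_assoc,
        Units.inv_mul, Units.mul_inv, Units.inv_mul_cancel_left,
        Units.mul_inv_cancel_left, mul_comm, mul_left_comm]
      try rw [mul_left_comm, Units.mul_inv, mul_one]
    · simp [mul_inv, mul_comm]
  · -- (τ,τ)
    simp only [mk_mul, _root_.map_one, MulAut.one_apply, Prod.mk_mul_mk, one_mul, mul_one,
      A1, A2, hττ, fwd, if_neg h1τ, eq_self_iff_true, if_true,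
      SemidirectProduct.ext_iff, Prod.mk.injEq]
    refine ⟨⟨?_, ?_⟩, trivial⟩
    · apply Units.ext
      simp only [mul_inv, _root_.mul_inv_rev, inv_inv, inv_neg, sc_inv, Tr_mul, Tr_sc,
        Tr_neg, hPhiInvNeg, hTrPhi, sc_neg, neg_mul, mul_neg, neg_neg, Units.val_mul,
        Units.val_neg, Units.val_one, sc_val, Tr_val, smul_mul_assoc, mul_smul_comm,
        smul_smul, one_mul, mul_one, one_smul, neg_smul, smul_neg, hsqv, mul_assoc,
        Units.inv_mul, Units.mul_inv, Units.inv_mul_cancel_left,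
        Units.mul_inv_cancel_left, mul_comm, mul_left_comm]
      try rw [mul_left_comm, Units.mul_inv, mul_one]
    · simp [mul_inv, mul_comm]

end Stmt3Aux
/-- Let `R` be a commutative ring, `Φ = [[0,1],[−1,0]]`, and
`C = ℤ/2 = {1, τ}`.  Consider the two actions of `C` on `G = GL₂(R) × Rˣ` where
`τ·(h,a) = (a·Φ h^{-⊤} Φ^{-1}, a)` (first) and `τ·(h,a) = (a·h^{-⊤}, a)`
(second).  The map `(h,a)⋊1 ↦ (a⁻¹h, a⁻¹)⋊1`, `(h,a)⋊τ ↦ (a⁻¹ h Φ, −a⁻¹)⋊τ`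
is a group isomorphism from the first semidirect product onto the second. -/
theorem stmt3 (R : Type*) [CommRing R]
    (Φ Φinv : Matrix (Fin 2) (Fin 2) R)
    (hΦ : Φ = !![0, 1; -1, 0]) (hΦinv : Φinv = !![0, -1; 1, 0])
    (τ : Multiplicative (ZMod 2)) (hτ : τ = Multiplicative.ofAdd 1)
    (φ₁ φ₂ : Multiplicative (ZMod 2) →* MulAut (GL (Fin 2) R × Rˣ))
    -- first action: τ·(h,a) = (a·Φ h^{-⊤} Φ⁻¹, a)
    (hφ₁ : ∀ (h : GL (Fin 2) R) (a : Rˣ),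
      (((φ₁ τ) (h, a)).1 : Matrix (Fin 2) (Fin 2) R) =
          (a : R) • (Φ * ((h⁻¹ : GL (Fin 2) R) : Matrix (Fin 2) (Fin 2) R)ᵀ * Φinv) ∧
        ((φ₁ τ) (h, a)).2 = a)
    -- second action: τ·(h,a) = (a·h^{-⊤}, a)
    (hφ₂ : ∀ (h : GL (Fin 2) R) (a : Rˣ),
      (((φ₂ τ) (h, a)).1 : Matrix (Fin 2) (Fin 2) R) =
          (a : R) • ((h⁻¹ : GL (Fin 2) R) : Matrix (Fin 2) (Fin 2) R)ᵀ ∧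
        ((φ₂ τ) (h, a)).2 = a) :
    ∃ e : ((GL (Fin 2) R × Rˣ) ⋊[φ₁] Multiplicative (ZMod 2)) ≃*
          ((GL (Fin 2) R × Rˣ) ⋊[φ₂] Multiplicative (ZMod 2)),
      ∀ (h : GL (Fin 2) R) (a : Rˣ),
        (((e ⟨(h, a), 1⟩).left.1 : Matrix (Fin 2) (Fin 2) R) =
            ((a⁻¹ : Rˣ) : R) • (h : Matrix (Fin 2) (Fin 2) R) ∧
          (e ⟨(h, a), 1⟩).left.2 = a⁻¹ ∧
          (e ⟨(h, a), 1⟩).right = 1) ∧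
        (((e ⟨(h, a), τ⟩).left.1 : Matrix (Fin 2) (Fin 2) R) =
            ((a⁻¹ : Rˣ) : R) • ((h : Matrix (Fin 2) (Fin 2) R) * Φ) ∧
          (e ⟨(h, a), τ⟩).left.2 = -a⁻¹ ∧
          (e ⟨(h, a), τ⟩).right = τ) := by
  open Stmt3Aux in
  have hPP' : Φ * Φinv = 1 := by
    subst hΦ hΦinv; norm_num [Matrix.mul_fin_two, ← Matrix.one_fin_two]
  have hP'P : Φinv * Φ = 1 := by
    subst hΦ hΦinv; norm_num [Matrix.mul_fin_two, ← Matrix.one_fin_two]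
  obtain ⟨ΦU, hΦUval, hΦUinvval⟩ :
      ∃ u : GL (Fin 2) R, (u : Matrix (Fin 2) (Fin 2) R) = Φ ∧
        ((u⁻¹ : GL (Fin 2) R) : Matrix (Fin 2) (Fin 2) R) = Φinv :=
    ⟨⟨Φ, Φinv, hPP', hP'P⟩, rfl, rfl⟩
  have hsqv : (ΦU : Matrix (Fin 2) (Fin 2) R) * ΦU = -(1 : Matrix (Fin 2) (Fin 2) R) := by
    rw [hΦUval]
    subst hΦ
    ext i j
    fin_cases i <;> fin_cases j <;> simp [Matrix.mul_fin_two, Matrix.one_apply]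
  have hsq : ΦU * ΦU = -1 := by
    apply Units.ext
    rw [Units.val_mul, hsqv, Units.val_neg, Units.val_one]
  have hPhiInvNeg : ΦU⁻¹ = -ΦU := by
    apply Units.ext
    rw [hΦUinvval, Units.val_neg, hΦUval]
    subst hΦ hΦinv
    ext i j
    fin_cases i <;> fin_cases j <;> simp
  have hTrPhi : Tr ΦU = -ΦU := by
    apply Units.ext
    rw [Tr_val, Units.val_neg, hΦUval]
    subst hΦ
    ext i j
    fin_cases i <;> fin_cases j <;> simp
  have h1τ : (1 : Multiplicative (ZMod 2)) ≠ τ := by subst hτ; decide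
  have hττ : τ * τ = 1 := by subst hτ; decide
  have hcase : ∀ c : Multiplicative (ZMod 2), c = 1 ∨ c = τ := by subst hτ; decide
  have A1 : ∀ (h : GL (Fin 2) R) (a : Rˣ),
      (φ₁ τ) (h, a) = (sc a * (ΦU * Tr h⁻¹ * ΦU⁻¹), a) := by
    intro h a
    refine Prod.ext (Units.ext ?_) (hφ₁ h a).2
    rw [(hφ₁ h a).1, sc_mul_val, Units.val_mul, Units.val_mul, Tr_val, hΦUval, hΦUinvval]
  have A2 : ∀ (h : GL (Fin 2) R) (a : Rˣ),
      (φ₂ τ) (h, a) = (sc a * Tr h⁻¹, a) := by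
    intro h a
    refine Prod.ext (Units.ext ?_) (hφ₂ h a).2
    rw [(hφ₂ h a).1, sc_mul_val, Tr_val]
  refine ⟨⟨⟨fwd φ₁ φ₂ ΦU τ, fwd φ₂ φ₁ ΦU τ, fwd_fwd φ₁ φ₂ ΦU hsq τ, fwd_fwd φ₂ φ₁ ΦU hsq τ⟩,
    fwd_mul φ₁ φ₂ ΦU τ hPhiInvNeg hTrPhi hsqv h1τ hττ hcase A1 A2⟩, ?_⟩
  intro h a
  refine ⟨⟨?_, ?_, ?_⟩, ?_, ?_, ?_⟩ <;>
    simp only [MulEquiv.coe_mk, Equiv.coe_fn_mk, fwd, if_neg h1τ, eq_self_iff_true,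
      if_true] <;>
    simp only [Units.val_mul, sc_val, smul_mul_assoc, one_mul, mul_assoc, hΦUval]
end

section
/- Let Γ be a group, Δ ≤ Γ a subgroup of index 2, and fix γ₀ ∈ Γ ∖ Δ. Let G be a group equipped with an automorphism θ satisfying θ∘θ = id, and form the semidirect product G ⋊ ℤ/2 where the nontrivial element acts by θ. Then the assignment r ↦ (ρ, A), where ρ : Δ → G is determined by r(δ) = (ρ(δ), 0) and A ∈ G by r(γ₀) = (A, 1), is a bijection between: (a) group homomorphisms r : Γ → G ⋊ ℤ/2 whose composition with the projection to ℤ/2 is the quotient map Γ → Γ/Δ ≅ ℤ/2; and (b) pairs (ρ, A) consisting of a homomorphism ρ : Δ → G and an element A ∈ G satisfying ρ(γ₀ δ γ₀^{-1}) = A·θ(ρ(δ))·A^{-1} for all δ ∈ Δ, and ρ(γ₀²) = A·θ(A). -/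
/-- Let `Δ ≤ Γ` be a subgroup of index 2 (hence normal), fix
`γ₀ ∈ Γ ∖ Δ` (so `γ₀² ∈ Δ`), and let `G` be a group with an involutive
automorphism `θ`, giving a semidirect product `G ⋊ ℤ/2` where the nontrivial
element acts by `θ`.  Then `r ↦ (ρ, A)`, with `ρ(δ) = (r δ).left` and
`A = (r γ₀).left`, is a bijection between homomorphisms `r : Γ → G ⋊ ℤ/2`
compatible with the projection to `ℤ/2` and pairs `(ρ, A)` of a homomorphism
`ρ : Δ → G` and `A ∈ G` with `ρ(γ₀ δ γ₀⁻¹) = A·θ(ρ(δ))·A⁻¹` for all `δ ∈ Δ`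
and `ρ(γ₀²) = A·θ(A)`. -/
theorem stmt13 (Γ : Type*) [Group Γ] (Δ : Subgroup Γ) (hΔn : Δ.Normal)
    (hΔ : Δ.index = 2) (γ₀ : Γ) (hγ₀ : γ₀ ∉ Δ) (hγ₀sq : γ₀ ^ 2 ∈ Δ)
    (G : Type*) [Group G] (θ : G ≃* G) (hθ : ∀ g : G, θ (θ g) = g)
    (φ : Multiplicative (ZMod 2) →* MulAut G)
    (hφ : φ (Multiplicative.ofAdd (1 : ZMod 2)) = θ) :
    ∃ e : {r : Γ →* G ⋊[φ] Multiplicative (ZMod 2) //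
            ∀ γ : Γ, (r γ).right = 1 ↔ γ ∈ Δ} ≃
          {pA : (Δ →* G) × G //
            (∀ δ : Δ, pA.1 ⟨γ₀ * (δ : Γ) * γ₀⁻¹, hΔn.conj_mem (δ : Γ) δ.2 γ₀⟩ =
              pA.2 * θ (pA.1 δ) * pA.2⁻¹) ∧
            pA.1 ⟨γ₀ ^ 2, hγ₀sq⟩ = pA.2 * θ pA.2},
      ∀ r, (∀ δ : Δ, (e r).1.1 δ = (r.1 (δ : Γ)).left) ∧
        (e r).1.2 = (r.1 γ₀).left := by
  classical
  set σ : Multiplicative (ZMod 2) := Multiplicative.ofAdd (1 : ZMod 2) with hσdef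
  have htwo : ∀ x : Multiplicative (ZMod 2), x = 1 ∨ x = σ := by decide
  have hσne : σ ≠ 1 := by decide
  have hσσ : σ * σ = 1 := by decide
  have hσinv : σ⁻¹ = σ := by decide
  have hφσ : ∀ g : G, φ σ g = θ g := fun g => by rw [hφ]
  have hφ1 : ∀ g : G, φ 1 g = g := fun g => by rw [map_one]; rfl
  have hmm : ∀ {a b : Γ}, a * b ∈ Δ ↔ (a ∈ Δ ↔ b ∈ Δ) := fun {a b} =>
    Subgroup.mul_mem_iff_of_index_two hΔ
  have hmemn : ∀ {γ : Γ}, γ ∉ Δ → γ * γ₀⁻¹ ∈ Δ := fun {γ} h => by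
    rw [hmm]
    simp only [Δ.inv_mem_iff]
    exact iff_of_false h hγ₀
  have hright : ∀ (r : Γ →* G ⋊[φ] Multiplicative (ZMod 2)),
      (∀ γ : Γ, (r γ).right = 1 ↔ γ ∈ Δ) → (r γ₀).right = σ := fun r hr =>
    (htwo _).resolve_left fun h => hγ₀ ((hr γ₀).mp h)
  refine ⟨Equiv.ofBijective (fun r =>
    ⟨(⟨⟨fun δ => (r.1 (δ : Γ)).left, ?_⟩, ?_⟩, (r.1 γ₀).left), ?_, ?_⟩) ⟨?_, ?_⟩,
    fun r => ⟨fun δ => rfl, rfl⟩⟩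
  · -- map_one
    show (r.1 ((1 : Δ) : Γ)).left = 1
    rw [OneMemClass.coe_one, map_one, SemidirectProduct.one_left]
  · -- map_mul
    intro δ δ'
    show (r.1 ((δ * δ' : Δ) : Γ)).left = (r.1 (δ : Γ)).left * (r.1 (δ' : Γ)).left
    rw [Subgroup.coe_mul, map_mul, SemidirectProduct.mul_left,
      (r.2 (δ : Γ)).mpr δ.2, hφ1]
  · -- conjugation condition
    intro δ
    show (r.1 (γ₀ * (δ : Γ) * γ₀⁻¹)).left =
      (r.1 γ₀).left * θ ((r.1 (δ : Γ)).left) * ((r.1 γ₀).left)⁻¹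
    have key : r.1 (γ₀ * (δ : Γ) * γ₀⁻¹) = r.1 γ₀ * r.1 (δ : Γ) * (r.1 γ₀)⁻¹ := by
      rw [← map_inv, ← map_mul, ← map_mul]
    rw [key, SemidirectProduct.mul_left, SemidirectProduct.mul_left,
      SemidirectProduct.mul_right, SemidirectProduct.inv_left, hright r.1 r.2,
      (r.2 (δ : Γ)).mpr δ.2, hφσ, mul_one, hσinv, hφσ, hφσ, hθ]
  · -- square condition
    show (r.1 (γ₀ ^ 2)).left = (r.1 γ₀).left * θ ((r.1 γ₀).left)
    rw [map_pow, sq, SemidirectProduct.mul_left, hright r.1 r.2, hφσ]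
  · -- injective
    intro r1 r2 h
    have h' := congrArg Subtype.val h
    have hδ : ∀ (a : Γ) (ha : a ∈ Δ), (r1.1 a).left = (r2.1 a).left := fun a ha =>
      DFunLike.congr_fun (congrArg Prod.fst h') (⟨a, ha⟩ : Δ)
    have hA : (r1.1 γ₀).left = (r2.1 γ₀).left := congrArg Prod.snd h'
    refine Subtype.ext (MonoidHom.ext fun γ => ?_)
    by_cases hγ : γ ∈ Δ
    · exact SemidirectProduct.ext (hδ γ hγ)
        (by rw [(r1.2 γ).mpr hγ, (r2.2 γ).mpr hγ])
    · have hγdec : γ = γ * γ₀⁻¹ * γ₀ := by group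
      have e1 : r1.1 γ = r1.1 (γ * γ₀⁻¹) * r1.1 γ₀ := by
        rw [← map_mul]; exact congrArg _ hγdec
      have e2 : r2.1 γ = r2.1 (γ * γ₀⁻¹) * r2.1 γ₀ := by
        rw [← map_mul]; exact congrArg _ hγdec
      rw [e1, e2]
      refine SemidirectProduct.ext ?_ ?_
      · rw [SemidirectProduct.mul_left, SemidirectProduct.mul_left,
          (r1.2 _).mpr (hmemn hγ), (r2.2 _).mpr (hmemn hγ), hφ1, hφ1,
          hδ _ (hmemn hγ), hA]
      · rw [SemidirectProduct.mul_right, SemidirectProduct.mul_right,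
          (r1.2 _).mpr (hmemn hγ), (r2.2 _).mpr (hmemn hγ),
          hright r1.1 r1.2, hright r2.1 r2.2]
  · -- surjective
    rintro ⟨⟨ρ, A⟩, hc1, hc2⟩
    have hc1' : ∀ (y : Γ) (hy : y ∈ Δ),
        ρ ⟨γ₀ * y * γ₀⁻¹, hΔn.conj_mem y hy γ₀⟩ = A * θ (ρ ⟨y, hy⟩) * A⁻¹ :=
      fun y hy => hc1 ⟨y, hy⟩
    have hρmul : ∀ {a b c : Γ} (ha : a ∈ Δ) (hb : b ∈ Δ) (hc : c ∈ Δ),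
        c = a * b → ρ ⟨c, hc⟩ = ρ ⟨a, ha⟩ * ρ ⟨b, hb⟩ := by
      rintro a b c ha hb hc rfl
      exact map_mul ρ ⟨a, ha⟩ ⟨b, hb⟩
    set F : Γ → G ⋊[φ] Multiplicative (ZMod 2) := fun γ =>
      if h : γ ∈ Δ then ⟨ρ ⟨γ, h⟩, 1⟩ else ⟨ρ ⟨γ * γ₀⁻¹, hmemn h⟩ * A, σ⟩ with hF
    have hFmul : ∀ x y : Γ, F (x * y) = F x * F y := by
      intro x y
      by_cases hx : x ∈ Δ <;> by_cases hy : y ∈ Δ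
      · have hxy : x * y ∈ Δ := hmm.mpr (iff_of_true hx hy)
        refine SemidirectProduct.ext ?_ ?_ <;>
          simp only [hF, dif_pos hx, dif_pos hy, dif_pos hxy,
            SemidirectProduct.mul_left, SemidirectProduct.mul_right]
        · rw [hφ1]; exact hρmul hx hy hxy rfl
        · rw [mul_one]
      · have hxy : x * y ∉ Δ := fun h => hy ((hmm.mp h).mp hx)
        refine SemidirectProduct.ext ?_ ?_ <;>
          simp only [hF, dif_pos hx, dif_neg hy, dif_neg hxy,
            SemidirectProduct.mul_left, SemidirectProduct.mul_right]
        · rw [hφ1, hρmul hx (hmemn hy) (hmemn hxy) (by group), mul_assoc]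
        · rw [one_mul]
      · have hxy : x * y ∉ Δ := fun h => hx ((hmm.mp h).mpr hy)
        refine SemidirectProduct.ext ?_ ?_ <;>
          simp only [hF, dif_neg hx, dif_pos hy, dif_neg hxy,
            SemidirectProduct.mul_left, SemidirectProduct.mul_right]
        · rw [hφσ, hρmul (hmemn hx) (hΔn.conj_mem y hy γ₀) (hmemn hxy) (by group),
            hc1' y hy]
          group
        · rw [mul_one]
      · have hxy : x * y ∈ Δ := hmm.mpr (iff_of_false hx hy)
        refine SemidirectProduct.ext ?_ ?_ <;>
          simp only [hF, dif_neg hx, dif_neg hy, dif_pos hxy,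
            SemidirectProduct.mul_left, SemidirectProduct.mul_right]
        · rw [hφσ, map_mul,
            hρmul (Δ.mul_mem (hmemn hx) (hΔn.conj_mem _ (hmemn hy) γ₀)) hγ₀sq hxy
              (by group),
            hρmul (hmemn hx) (hΔn.conj_mem _ (hmemn hy) γ₀)
              (Δ.mul_mem (hmemn hx) (hΔn.conj_mem _ (hmemn hy) γ₀)) rfl,
            hc1' _ (hmemn hy), hc2]
          group
        · exact hσσ.symm
    have hr : ∀ γ : Γ, ((MonoidHom.mk' F hFmul) γ).right = 1 ↔ γ ∈ Δ := by
      intro γ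
      by_cases h : γ ∈ Δ
      · simp only [MonoidHom.mk'_apply, hF, dif_pos h]
        exact iff_of_true trivial h
      · simp only [MonoidHom.mk'_apply, hF, dif_neg h]
        exact iff_of_false hσne h
    refine ⟨⟨MonoidHom.mk' F hFmul, hr⟩, Subtype.ext (Prod.ext ?_ ?_)⟩
    · refine MonoidHom.ext fun δ => ?_
      show (F (δ : Γ)).left = ρ δ
      rw [hF]
      simp only [dif_pos δ.2]
    · show (F γ₀).left = A
      rw [hF]
      simp only [dif_neg hγ₀]
      have : ρ ⟨γ₀ * γ₀⁻¹, hmemn hγ₀⟩ = 1 := by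
        have h1 : γ₀ * γ₀⁻¹ = (1 : Γ) := mul_inv_cancel γ₀
        have : (⟨γ₀ * γ₀⁻¹, hmemn hγ₀⟩ : Δ) = 1 := Subtype.ext h1
        rw [this, map_one]
      rw [this, one_mul]
end
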